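/- For b > 0 and all ν ∈ [0, 1/2], we have S(√b) · b^ν ≥ ν b + (1−ν) − ν(√b − 1)², where S(h) = h^{1/(h−1)} / (e · log(h^{1/(h−1)})) for h ≠ 1 and S(1) = 1 is Specht's ratio. -/

import Mathlib

/-- Specht's ratio `S(h) = h^{1/(h-1)} / (e log h^{1/(h-1)})` for `h ≠ 1`, with `S(1) = 1`. -/
noncomputable def specht (h : ℝ) : ℝ :=
  if h = 1 then 1
  else h ^ ((1:ℝ)/(h-1)) / (Real.exp 1 * Real.log (h ^ ((1:ℝ)/(h-1))))

lemma specht_key (h : ℝ) (hh : 0 < h) (lam : ℝ) :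
    lam * (h - 1) + 1 ≤ specht h * h ^ lam := by
  rcases eq_or_ne h 1 with h1 | h1
  · simp [specht, h1]
  · set L := Real.log h with hL
    have hL0 : L ≠ 0 := Real.log_ne_zero_of_pos_of_ne_one hh h1
    have hc : 0 < (h - 1) / L := by
      rcases lt_or_gt_of_ne h1 with hlt | hgt
      · have : L < 0 := Real.log_neg hh hlt
        exact div_pos_of_neg_of_neg (by linarith) this
      · have : 0 < L := Real.log_pos hgt
        exact div_pos (by linarith) this
    have h1' : h - 1 ≠ 0 := sub_ne_zero.mpr h1
    have hrw : specht h * h ^ lam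
        = (h - 1) / L * Real.exp (lam * L + L / (h - 1) - 1) := by
      have e1 : h ^ ((1:ℝ)/(h-1)) = Real.exp (L / (h - 1)) := by
        rw [Real.rpow_def_of_pos hh]; ring_nf; rw [hL]; ring_nf
      have e2 : h ^ lam = Real.exp (lam * L) := by
        rw [Real.rpow_def_of_pos hh]; ring_nf; rw [hL]; ring_nf
      rw [specht, if_neg h1, e1, e2, Real.log_exp]
      rw [Real.exp_sub, Real.exp_add]
      field_simp
    rw [hrw]
    have hexp : lam * L + L / (h - 1) ≤ Real.exp (lam * L + L / (h - 1) - 1) := by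
      have := Real.add_one_le_exp (lam * L + L / (h - 1) - 1)
      linarith
    calc lam * (h - 1) + 1 = (h - 1) / L * (lam * L + L / (h - 1)) := by
          field_simp
      _ ≤ (h - 1) / L * Real.exp (lam * L + L / (h - 1) - 1) := by
          exact mul_le_mul_of_nonneg_left hexp hc.le

theorem specht_mul_rpow_ge (b : ℝ) (hb : 0 < b) (ν : ℝ) (hν : ν ∈ Set.Icc (0:ℝ) (1/2)) :
    ν * b + (1 - ν) - ν * (Real.sqrt b - 1) ^ 2 ≤ specht (Real.sqrt b) * b ^ ν := by
  have hs : 0 < Real.sqrt b := Real.sqrt_pos.mpr hb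
  have hsq : Real.sqrt b ^ 2 = b := Real.sq_sqrt hb.le
  have key := specht_key (Real.sqrt b) hs (2 * ν)
  have hpow : Real.sqrt b ^ (2 * ν) = b ^ ν := by
    rw [Real.rpow_mul hs.le, Real.rpow_two, hsq]
  rw [hpow] at key
  have heq : ν * b + (1 - ν) - ν * (Real.sqrt b - 1) ^ 2 = 2 * ν * (Real.sqrt b - 1) + 1 := by
    linear_combination -ν * hsq
  linarith
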